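/- Let κ < 𝔭_c^- < 𝔭_c^+. Then there exist constants 0 < c₁ ≤ c₂, depending only on κ, γ_i, γ_c, 𝔭_c^-, 𝔭_c^+, and a threshold ε̄ > 0, such that for every 0 < ε < ε̄ and every p ∈ [𝔭_c^-, 𝔭_c^+] one has c₁ ε^{1/γ_c} ≤ −𝒯_ε'(p) ≤ c₂ ε^{1/γ_c}. -/

import Mathlib

set_option maxHeartbeats 1000000


open Set Filter MeasureTheory Topology

/-- The singular pressure law `𝒫_ε(τ) = κ τ^{-γᵢ} + ε (τ-1)^{-γ_c}`. -/
noncomputable def Pe (κ γi γc ε τ : ℝ) : ℝ := κ * τ ^ (-γi) + ε * (τ - 1) ^ (-γc)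

lemma hasDerivAt_Pe (κ γi γc ε τ : ℝ) (hτ : 1 < τ) :
    HasDerivAt (Pe κ γi γc ε)
      (κ * (-γi * τ ^ (-γi - 1)) + ε * (-γc * (τ - 1) ^ (-γc - 1))) τ := by
  have hτ0 : τ ≠ 0 := by linarith
  have hs : τ - 1 ≠ 0 := by intro h; rw [sub_eq_zero] at h; exact absurd h.symm hτ.ne
  have h1 : HasDerivAt (fun x : ℝ => x ^ (-γi)) (-γi * τ ^ (-γi - 1)) τ :=
    Real.hasDerivAt_rpow_const (Or.inl hτ0)
  have h2 : HasDerivAt (fun x : ℝ => (x - 1) ^ (-γc)) (-γc * (τ - 1) ^ (-γc - 1)) τ := by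
    have := (Real.hasDerivAt_rpow_const (p := -γc) (Or.inl hs)).comp τ
      ((hasDerivAt_id τ).sub_const 1)
    simpa [Function.comp_def] using this
  have e : Pe κ γi γc ε = fun y => κ * y ^ (-γi) + ε * (y - 1) ^ (-γc) := rfl
  rw [e]; exact (h1.const_mul κ).add (h2.const_mul ε)

lemma Pe_strictAntiOn (κ γi γc ε : ℝ) (hκ : 0 < κ) (hγi : 1 < γi) (hγc : 1 < γc)
    (hε : 0 < ε) : StrictAntiOn (Pe κ γi γc ε) (Ioi 1) := by
  apply strictAntiOn_of_deriv_neg (convex_Ioi 1)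
  · intro x hx
    exact (hasDerivAt_Pe κ γi γc ε x hx).continuousAt.continuousWithinAt
  · intro x hx
    rw [interior_Ioi] at hx
    have hx1 : (1:ℝ) < x := hx
    rw [(hasDerivAt_Pe κ γi γc ε x hx1).deriv]
    have p1 : (0:ℝ) < x ^ (-γi - 1) := Real.rpow_pos_of_pos (by linarith) _
    have p2 : (0:ℝ) < (x - 1) ^ (-γc - 1) := Real.rpow_pos_of_pos (by linarith) _
    nlinarith [mul_pos hε (mul_pos (by linarith : (0:ℝ) < γc) p2),
      mul_pos hκ (mul_pos (by linarith : (0:ℝ) < γi) p1)]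

lemma Pe_pos (κ γi γc ε τ : ℝ) (hκ : 0 < κ) (hε : 0 < ε) (hτ : 1 < τ) :
    0 < Pe κ γi γc ε τ := by
  have p1 : (0:ℝ) < τ ^ (-γi) := Real.rpow_pos_of_pos (by linarith) _
  have p2 : (0:ℝ) < (τ - 1) ^ (-γc) := Real.rpow_pos_of_pos (by linarith) _
  have := mul_pos hκ p1
  have := mul_pos hε p2
  unfold Pe; linarith

lemma T_continuousAt (κ γi γc ε : ℝ) (hκ : 0 < κ) (hγi : 1 < γi) (hγc : 1 < γc)
    (hε : 0 < ε) (T : ℝ → ℝ)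
    (hT : ∀ p > (0:ℝ), 1 < T p ∧ Pe κ γi γc ε (T p) = p)
    (p : ℝ) (hp : 0 < p) : ContinuousAt T p := by
  rw [Metric.continuousAt_iff]
  intro η hη
  have hanti := Pe_strictAntiOn κ γi γc ε hκ hγi hγc hε
  obtain ⟨ha1, hfa⟩ := hT p hp
  set a := T p with ha
  set η' := min η ((a - 1) / 2) with hη'def
  have hη'0 : 0 < η' := lt_min hη (by linarith)
  have hη'le : η' ≤ (a - 1) / 2 := min_le_right _ _
  have hm1 : (1:ℝ) < a - η' := by linarith
  have hmem1 : a - η' ∈ Ioi (1:ℝ) := hm1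
  have hmem2 : a + η' ∈ Ioi (1:ℝ) := by simp only [mem_Ioi]; linarith
  have hamem : a ∈ Ioi (1:ℝ) := ha1
  have h1 : p < Pe κ γi γc ε (a - η') := by
    have := hanti hmem1 hamem (by linarith)
    rwa [hfa] at this
  have h2 : Pe κ γi γc ε (a + η') < p := by
    have := hanti hamem hmem2 (by linarith)
    rwa [hfa] at this
  have hfpos : 0 < Pe κ γi γc ε (a + η') := Pe_pos κ γi γc ε _ hκ hε hmem2
  refine ⟨min (Pe κ γi γc ε (a - η') - p) (p - Pe κ γi γc ε (a + η')),
    lt_min (by linarith) (by linarith), ?_⟩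
  intro q hq
  rw [Real.dist_eq] at hq
  have hq1 : q < Pe κ γi γc ε (a - η') := by
    have h := abs_lt.mp hq
    have := min_le_left (Pe κ γi γc ε (a - η') - p) (p - Pe κ γi γc ε (a + η'))
    linarith [h.2]
  have hq2 : Pe κ γi γc ε (a + η') < q := by
    have h := abs_lt.mp hq
    have := min_le_right (Pe κ γi γc ε (a - η') - p) (p - Pe κ γi γc ε (a + η'))
    linarith [h.1]
  have hq0 : 0 < q := lt_trans hfpos hq2
  obtain ⟨hb1, hfb⟩ := hT q hq0
  set b := T q with hb
  have hbmem : b ∈ Ioi (1:ℝ) := hb1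
  have hbu : b < a + η' := by
    by_contra hcon
    push_neg at hcon
    rcases eq_or_lt_of_le hcon with heq | hlt
    · rw [heq, hfb] at hq2; exact lt_irrefl q hq2
    · have := hanti hmem2 hbmem hlt
      rw [hfb] at this
      linarith
  have hbl : a - η' < b := by
    by_contra hcon
    push_neg at hcon
    rcases eq_or_lt_of_le hcon with heq | hlt
    · rw [← heq, hfb] at hq1; exact lt_irrefl q hq1
    · have := hanti hbmem hmem1 hlt
      rw [hfb] at this
      linarith
  rw [Real.dist_eq]
  have : |b - a| < η' := abs_lt.mpr ⟨by linarith, by linarith⟩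
  exact lt_of_lt_of_le this (min_le_left _ _)

/-- On a congested-pressure interval `[𝔭_c⁻, 𝔭_c⁺] ⊂ (κ,∞)`, the derivative of `𝒯_ε`
satisfies `c₁ ε^{1/γ_c} ≤ -𝒯_ε'(p) ≤ c₂ ε^{1/γ_c}` with constants independent of `ε`. -/
theorem stmt6 (κ γi γc pc1 pc2 : ℝ) (hκ : 0 < κ) (hγi : 1 < γi) (hγc : 1 < γc)
    (hpc1 : κ < pc1) (hpc12 : pc1 < pc2)
    (T : ℝ → ℝ → ℝ)
    (hT : ∀ ε > (0:ℝ), ∀ p > (0:ℝ), 1 < T ε p ∧ Pe κ γi γc ε (T ε p) = p) :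
    ∃ c₁ c₂ εb : ℝ, 0 < c₁ ∧ c₁ ≤ c₂ ∧ 0 < εb ∧
      ∀ ε, 0 < ε → ε < εb → ∀ p ∈ Icc pc1 pc2,
        c₁ * ε ^ (1 / γc) ≤ -deriv (T ε) p ∧ -deriv (T ε) p ≤ c₂ * ε ^ (1 / γc) := by
  have hγc0 : (0:ℝ) < γc := by linarith
  have hγi0 : (0:ℝ) < γi := by linarith
  have hκ1 : (0:ℝ) < pc1 - κ := by linarith
  have hpc2 : (0:ℝ) < pc2 := by linarith
  set B₁ : ℝ := γc * (pc1 - κ) ^ (1 + 1/γc) with hB₁def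
  set B₂ : ℝ := κ * γi + γc * pc2 ^ (1 + 1/γc) with hB₂def
  have hB₁pos : 0 < B₁ := mul_pos hγc0 (Real.rpow_pos_of_pos hκ1 _)
  have hB₂pos : 0 < B₂ := by
    have := mul_pos hγc0 (Real.rpow_pos_of_pos hpc2 (1 + 1/γc))
    have := mul_pos hκ hγi0
    rw [hB₂def]; linarith
  have hB₁₂ : B₁ ≤ B₂ := by
    have h1 : (pc1 - κ) ^ (1 + 1/γc) ≤ pc2 ^ (1 + 1/γc) :=
      Real.rpow_le_rpow hκ1.le (by linarith) (by positivity)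
    have := mul_pos hκ hγi0
    rw [hB₁def, hB₂def]
    nlinarith
  refine ⟨B₂⁻¹, B₁⁻¹, min 1 (pc1 - κ), inv_pos.mpr hB₂pos,
    inv_anti₀ hB₁pos hB₁₂, lt_min one_pos hκ1, ?_⟩
  intro ε hε hεb p hp
  have hε1 : ε ≤ 1 := le_of_lt (lt_of_lt_of_le hεb (min_le_left _ _))
  have hεκ : ε < pc1 - κ := lt_of_lt_of_le hεb (min_le_right _ _)
  have hp0 : 0 < p := by have := hp.1; linarith
  obtain ⟨ha1, hfa⟩ := hT ε hε p hp0
  set a := T ε p with hadef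
  set s := a - 1 with hsdef
  have hs0 : 0 < s := by rw [hsdef]; linarith
  have ha0 : 0 < a := by linarith
  -- key identity
  have hkey : ε * s ^ (-γc) = p - κ * a ^ (-γi) := by
    have : κ * a ^ (-γi) + ε * s ^ (-γc) = p := hfa
    linarith
  have haexp : (0:ℝ) < κ * a ^ (-γi) :=
    mul_pos hκ (Real.rpow_pos_of_pos ha0 _)
  have haexp1 : κ * a ^ (-γi) < κ := by
    have : a ^ (-γi) < 1 := Real.rpow_lt_one_of_one_lt_of_neg ha1 (by linarith)
    nlinarith
  have hsγpos : (0:ℝ) < s ^ γc := Real.rpow_pos_of_pos hs0 _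
  have hEl : pc1 - κ ≤ ε * s ^ (-γc) := by
    rw [hkey]; have := hp.1; linarith
  have hEu : ε * s ^ (-γc) ≤ pc2 := by
    rw [hkey]; have := hp.2; linarith
  have hsneg : s ^ (-γc) = (s ^ γc)⁻¹ := by
    rw [Real.rpow_neg hs0.le]
  -- bounds on s
  have hsl : (ε / pc2) ^ γc⁻¹ ≤ s := by
    rw [Real.rpow_inv_le_iff_of_pos (by positivity) hs0.le hγc0]
    rw [div_le_iff₀ hpc2]
    rw [hsneg] at hEu
    calc ε = (ε * (s ^ γc)⁻¹) * s ^ γc := by field_simp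
    _ ≤ pc2 * s ^ γc := by
        apply mul_le_mul_of_nonneg_right hEu hsγpos.le
    _ = s ^ γc * pc2 := by ring
  have hsu : s ≤ (ε / (pc1 - κ)) ^ γc⁻¹ := by
    rw [Real.le_rpow_inv_iff_of_pos hs0.le (by positivity) hγc0]
    rw [le_div_iff₀ hκ1]
    rw [hsneg] at hEl
    calc s ^ γc * (pc1 - κ) ≤ s ^ γc * (ε * (s ^ γc)⁻¹) := by
          apply mul_le_mul_of_nonneg_left hEl hsγpos.le
    _ = ε := by field_simp
  -- derivative of T
  have hDval := hasDerivAt_Pe κ γi γc ε a ha1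
  set D : ℝ := κ * (γi * a ^ (-γi - 1)) + ε * (γc * s ^ (-γc - 1)) with hDdef
  have hD1pos : 0 < κ * (γi * a ^ (-γi - 1)) :=
    mul_pos hκ (mul_pos hγi0 (Real.rpow_pos_of_pos ha0 _))
  have hD2pos : 0 < ε * (γc * s ^ (-γc - 1)) :=
    mul_pos hε (mul_pos hγc0 (Real.rpow_pos_of_pos hs0 _))
  have hDpos : 0 < D := by rw [hDdef]; linarith
  have hfd : HasDerivAt (Pe κ γi γc ε) (-D) a := by
    have : κ * (-γi * a ^ (-γi - 1)) + ε * (-γc * (a - 1) ^ (-γc - 1)) = -D := by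
      rw [hDdef, hsdef]; ring
    rwa [this] at hDval
  have hcont : ContinuousAt (T ε) p :=
    T_continuousAt κ γi γc ε hκ hγi hγc hε (T ε) (fun q hq => hT ε hε q hq) p hp0
  have hev : ∀ᶠ y in 𝓝 p, Pe κ γi γc ε (T ε y) = y :=
    eventually_of_mem (Ioi_mem_nhds hp0) (fun y hy => (hT ε hε y hy).2)
  have hTd : HasDerivAt (T ε) (-D)⁻¹ p :=
    HasDerivAt.of_local_left_inverse hcont hfd (by simp [hDpos.ne']) hev
  have hderiv : -deriv (T ε) p = D⁻¹ := by
    rw [hTd.deriv, inv_neg, neg_neg]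
  rw [hderiv]
  -- rpow computations
  have hεrpos : (0:ℝ) < ε ^ (1/γc) := Real.rpow_pos_of_pos hε _
  have hεrneg : ε ^ (-(1/γc)) = (ε ^ (1/γc))⁻¹ := Real.rpow_neg hε.le _
  have hεrnpos : (0:ℝ) < ε ^ (-(1/γc)) := Real.rpow_pos_of_pos hε _
  have hεrge1 : (1:ℝ) ≤ ε ^ (-(1/γc)) :=
    Real.one_le_rpow_of_pos_of_le_one_of_nonpos hε hε1 (neg_nonpos.mpr (by positivity))
  -- the term ε * γc * s^{-γc-1} equals γc * (ε * s^{-γc}) / s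
  have hsplit : s ^ (-γc - 1) = s ^ (-γc) * s⁻¹ := by
    rw [show -γc - 1 = -γc + (-1) by ring, Real.rpow_add hs0, Real.rpow_neg_one]
  -- upper bound on D
  have hDub : D ≤ B₂ * ε ^ (-(1/γc)) := by
    have h1 : κ * (γi * a ^ (-γi - 1)) ≤ κ * γi := by
      have h0 : a ^ (-γi - 1) ≤ 1 :=
        Real.rpow_le_one_of_one_le_of_nonpos ha1.le (by linarith)
      calc κ * (γi * a ^ (-γi - 1)) = (κ * γi) * a ^ (-γi - 1) := by ring
      _ ≤ (κ * γi) * 1 := mul_le_mul_of_nonneg_left h0 (by positivity)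
      _ = κ * γi := mul_one _
    have hsinv : s⁻¹ ≤ pc2 ^ (1/γc) * ε ^ (-(1/γc)) := by
      have hs_ge : (ε / pc2) ^ γc⁻¹ ≤ s := hsl
      have hpos : (0:ℝ) < (ε / pc2) ^ γc⁻¹ := Real.rpow_pos_of_pos (by positivity) _
      have h := inv_anti₀ hpos hs_ge
      calc s⁻¹ ≤ ((ε / pc2) ^ γc⁻¹)⁻¹ := h
      _ = pc2 ^ (1/γc) * ε ^ (-(1/γc)) := by
          rw [one_div, Real.rpow_neg hε.le, Real.div_rpow hε.le hpc2.le, inv_div,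
            div_eq_mul_inv]
    have h2 : ε * (γc * s ^ (-γc - 1)) ≤ γc * pc2 ^ (1 + 1/γc) * ε ^ (-(1/γc)) := by
      have heq : ε * (γc * s ^ (-γc - 1)) = γc * (ε * s ^ (-γc)) * s⁻¹ := by
        rw [hsplit]; ring
      rw [heq]
      have hstep : γc * (ε * s ^ (-γc)) * s⁻¹ ≤ γc * pc2 * s⁻¹ := by
        apply mul_le_mul_of_nonneg_right _ (inv_nonneg.mpr hs0.le)
        exact mul_le_mul_of_nonneg_left hEu hγc0.le
      refine le_trans hstep ?_
      have : γc * pc2 * s⁻¹ ≤ γc * pc2 * (pc2 ^ (1/γc) * ε ^ (-(1/γc))) :=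
        mul_le_mul_of_nonneg_left hsinv (by positivity)
      refine le_trans this (le_of_eq ?_)
      rw [Real.rpow_add hpc2, Real.rpow_one]
      ring
    calc D ≤ κ * γi + γc * pc2 ^ (1 + 1/γc) * ε ^ (-(1/γc)) := by
          rw [hDdef]; linarith
    _ ≤ κ * γi * ε ^ (-(1/γc)) + γc * pc2 ^ (1 + 1/γc) * ε ^ (-(1/γc)) := by
          have : κ * γi ≤ κ * γi * ε ^ (-(1/γc)) := by nlinarith [mul_pos hκ hγi0]
          linarith
    _ = B₂ * ε ^ (-(1/γc)) := by rw [hB₂def]; ring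
  -- lower bound on D
  have hDlb : B₁ * ε ^ (-(1/γc)) ≤ D := by
    have hsinv : (pc1 - κ) ^ (1/γc) * ε ^ (-(1/γc)) ≤ s⁻¹ := by
      have hpos : (0:ℝ) < (ε / (pc1 - κ)) ^ γc⁻¹ := Real.rpow_pos_of_pos (by positivity) _
      have h := inv_anti₀ hs0 hsu
      calc (pc1 - κ) ^ (1/γc) * ε ^ (-(1/γc)) = ((ε / (pc1 - κ)) ^ γc⁻¹)⁻¹ := by
            rw [one_div, Real.rpow_neg hε.le, Real.div_rpow hε.le hκ1.le, inv_div,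
              div_eq_mul_inv]
      _ ≤ s⁻¹ := h
    have h2 : γc * (pc1 - κ) ^ (1 + 1/γc) * ε ^ (-(1/γc)) ≤ ε * (γc * s ^ (-γc - 1)) := by
      have heq : ε * (γc * s ^ (-γc - 1)) = γc * (ε * s ^ (-γc)) * s⁻¹ := by
        rw [hsplit]; ring
      rw [heq]
      have hstep : γc * (pc1 - κ) * s⁻¹ ≤ γc * (ε * s ^ (-γc)) * s⁻¹ := by
        apply mul_le_mul_of_nonneg_right _ (inv_nonneg.mpr hs0.le)
        exact mul_le_mul_of_nonneg_left hEl hγc0.le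
      refine le_trans ?_ hstep
      have : γc * (pc1 - κ) * ((pc1 - κ) ^ (1/γc) * ε ^ (-(1/γc))) ≤ γc * (pc1 - κ) * s⁻¹ :=
        mul_le_mul_of_nonneg_left hsinv (by positivity)
      refine le_trans (le_of_eq ?_) this
      rw [Real.rpow_add hκ1, Real.rpow_one]
      ring
    calc B₁ * ε ^ (-(1/γc)) = γc * (pc1 - κ) ^ (1 + 1/γc) * ε ^ (-(1/γc)) := by
          rw [hB₁def]
    _ ≤ ε * (γc * s ^ (-γc - 1)) := h2
    _ ≤ D := by rw [hDdef]; linarith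
  clear_value B₁ B₂
  constructor
  · have heq : B₂⁻¹ * ε ^ (1/γc) = (B₂ * ε ^ (-(1/γc)))⁻¹ := by
      rw [hεrneg, mul_inv, inv_inv]
    rw [heq]
    exact inv_anti₀ hDpos hDub
  · have heq : B₁⁻¹ * ε ^ (1/γc) = (B₁ * ε ^ (-(1/γc)))⁻¹ := by
      rw [hεrneg, mul_inv, inv_inv]
    rw [heq]
    exact inv_anti₀ (by positivity) hDlb
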